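/- Let Γ be a doubly regular tournament on n vertices, and let 𝓑 consist of all out-neighborhoods and all in-neighborhoods of vertices. Then (V,𝓑) is not a 3-design: it is impossible for every 3-subset of vertices to lie in the same number of blocks. -/

import Mathlib

open Finset

private lemma key3_aux {α : Type*} (s : Finset α) (p1 p2 p3 : α → Prop)
    [DecidablePred p1] [DecidablePred p2] [DecidablePred p3] :
    (s.filter fun w => p1 w ∧ p2 w ∧ p3 w).card +
    (s.filter fun w => ¬p1 w ∧ ¬p2 w ∧ ¬p3 w).card +
    (s.filter p1).card + (s.filter p2).card + (s.filter p3).card =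
    s.card + (s.filter fun w => p1 w ∧ p2 w).card +
    (s.filter fun w => p1 w ∧ p3 w).card + (s.filter fun w => p2 w ∧ p3 w).card := by
  classical
  simp only [Finset.card_filter]
  rw [Finset.card_eq_sum_ones s]
  simp only [← Finset.sum_add_distrib]
  refine Finset.sum_congr rfl fun w _ => ?_
  by_cases h1 : p1 w <;> by_cases h2 : p2 w <;> by_cases h3 : p3 w <;> simp [h1, h2, h3]

private lemma split_card_aux {α : Type*} [Fintype α] [DecidableEq α] (T : Finset α)
    (p : α → Prop) [DecidablePred p] :
    ((univ \ T).filter p).card + (T.filter p).card = (univ.filter p).card := by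
  rw [← Finset.card_union_of_disjoint
      (Finset.disjoint_filter_filter Finset.sdiff_disjoint),
    ← Finset.filter_union, Finset.sdiff_union_of_subset (Finset.subset_univ T)]

private lemma tri_count_aux {V : Type*} [Fintype V] [DecidableEq V]
    (n k m : ℕ) (hn : Fintype.card V = n)
    (r : V → V → Prop) [DecidableRel r]
    (hirr : ∀ x, ¬r x x)
    (htour : ∀ x y : V, x ≠ y → (r x y ↔ ¬r y x))
    (hin : ∀ x, (univ.filter fun w => r w x).card = k)
    (hcoin : ∀ x y : V, x ≠ y → (univ.filter fun w => r w x ∧ r w y).card = m)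
    (x y z : V) (hxy : r x y) (hyz : r y z) :
    (univ.filter fun w => r w x ∧ r w y ∧ r w z).card +
    (univ.filter fun w => r x w ∧ r y w ∧ r z w).card +
    3 * k + (if r x z then 1 else 0) = n + 3 * m := by
  have hxyne : x ≠ y := fun h => hirr x (h ▸ hxy)
  have hyzne : y ≠ z := fun h => hirr y (h ▸ hyz)
  have hyx : ¬ r y x := (htour x y hxyne).mp hxy
  have hzy : ¬ r z y := (htour y z hyzne).mp hyz
  have hxzne : x ≠ z := fun h => hyx (h ▸ hyz)
  set T : Finset V := {x, y, z} with hT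
  have hTcard : T.card = 3 := by
    rw [hT, Finset.card_insert_of_notMem (by simp [hxyne, hxzne]),
      Finset.card_insert_of_notMem (by simp [hyzne]), Finset.card_singleton]
  have hTsub : (univ \ T).card + 3 = n := by
    rw [← hTcard, Finset.card_sdiff_add_card_eq_card (Finset.subset_univ T), Finset.card_univ, hn]
  -- B rewrite
  have hB : ((univ \ T).filter fun w => ¬r w x ∧ ¬r w y ∧ ¬r w z) =
      (univ.filter fun w => r x w ∧ r y w ∧ r z w) := by
    ext w
    simp only [mem_filter, mem_sdiff, mem_univ, true_and, hT, mem_insert, mem_singleton]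
    constructor
    · rintro ⟨hw, h1, h2, h3⟩
      push_neg at hw
      exact ⟨(htour x w (Ne.symm hw.1)).mpr h1, (htour y w (Ne.symm hw.2.1)).mpr h2,
        (htour z w (Ne.symm hw.2.2)).mpr h3⟩
    · rintro ⟨h1, h2, h3⟩
      have hw1 : w ≠ x := fun h => hirr x (h ▸ h1)
      have hw2 : w ≠ y := fun h => hirr y (h ▸ h2)
      have hw3 : w ≠ z := fun h => hirr z (h ▸ h3)
      exact ⟨by simp [hw1, hw2, hw3], (htour x w (Ne.symm hw1)).mp h1,
        (htour y w (Ne.symm hw2)).mp h2, (htour z w (Ne.symm hw3)).mp h3⟩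
  have hA : ((univ \ T).filter fun w => r w x ∧ r w y ∧ r w z) =
      (univ.filter fun w => r w x ∧ r w y ∧ r w z) := by
    ext w
    simp only [mem_filter, mem_sdiff, mem_univ, true_and, hT, mem_insert, mem_singleton]
    constructor
    · rintro ⟨_, h⟩; exact h
    · rintro ⟨h1, h2, h3⟩
      refine ⟨?_, h1, h2, h3⟩
      rintro (rfl | rfl | rfl)
      exacts [hirr w h1, hirr w h2, hirr w h3]
  have hkey := key3_aux (univ \ T) (fun w => r w x) (fun w => r w y) (fun w => r w z)
  rw [hA, hB] at hkey
  have hs1 := split_card_aux T (fun w => r w x)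
  have hs2 := split_card_aux T (fun w => r w y)
  have hs3 := split_card_aux T (fun w => r w z)
  have hq12 := split_card_aux T (fun w => r w x ∧ r w y)
  have hq13 := split_card_aux T (fun w => r w x ∧ r w z)
  have hq23 := split_card_aux T (fun w => r w y ∧ r w z)
  rw [hin x] at hs1; rw [hin y] at hs2; rw [hin z] at hs3
  rw [hcoin x y hxyne] at hq12
  rw [hcoin x z hxzne] at hq13
  rw [hcoin y z hyzne] at hq23
  by_cases hxz : r x z
  · have hzx : ¬ r z x := (htour x z hxzne).mp hxz
    have e1 : (T.filter fun w => r w x).card = 0 := by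
      rw [hT]; simp [Finset.filter_insert, Finset.filter_singleton, hirr x, hyx, hzx]
    have e2 : (T.filter fun w => r w y).card = 1 := by
      rw [hT]; simp [Finset.filter_insert, Finset.filter_singleton, hxy, hirr y, hzy]
    have e3 : (T.filter fun w => r w z).card = 2 := by
      rw [hT]
      simp only [Finset.filter_insert, Finset.filter_singleton, if_pos hxz, if_pos hyz,
        if_neg (hirr z), insert_empty_eq]
      rw [Finset.card_insert_of_notMem (by simp [hxyne]), Finset.card_singleton]
    have f12 : (T.filter fun w => r w x ∧ r w y).card = 0 := by
      rw [hT]; simp [Finset.filter_insert, Finset.filter_singleton, hirr x, hyx, hzx]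
    have f13 : (T.filter fun w => r w x ∧ r w z).card = 0 := by
      rw [hT]; simp [Finset.filter_insert, Finset.filter_singleton, hirr x, hyx, hzx]
    have f23 : (T.filter fun w => r w y ∧ r w z).card = 1 := by
      rw [hT]; simp [Finset.filter_insert, Finset.filter_singleton, hxy, hxz, hirr y, hzy]
    simp only [hxz, if_true]
    omega
  · have hzx : r z x := by
      have := (htour x z hxzne); tauto
    have e1 : (T.filter fun w => r w x).card = 1 := by
      rw [hT]; simp [Finset.filter_insert, Finset.filter_singleton, hirr x, hyx, hzx]
    have e2 : (T.filter fun w => r w y).card = 1 := by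
      rw [hT]; simp [Finset.filter_insert, Finset.filter_singleton, hxy, hirr y, hzy]
    have e3 : (T.filter fun w => r w z).card = 1 := by
      rw [hT]; simp [Finset.filter_insert, Finset.filter_singleton, hxz, hyz, hirr z]
    have f12 : (T.filter fun w => r w x ∧ r w y).card = 0 := by
      rw [hT]; simp [Finset.filter_insert, Finset.filter_singleton, hirr x, hyx, hzy]
    have f13 : (T.filter fun w => r w x ∧ r w z).card = 0 := by
      rw [hT]; simp [Finset.filter_insert, Finset.filter_singleton, hirr x, hyx, hirr z]
    have f23 : (T.filter fun w => r w y ∧ r w z).card = 0 := by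
      rw [hT]; simp [Finset.filter_insert, Finset.filter_singleton, hxz, hirr y, hzy]
    simp only [hxz, if_false]
    omega

/-- For a doubly regular tournament on `n ≥ 7` vertices, the collection of
all out-neighborhoods and all in-neighborhoods is not a 3-design: it is impossible for
every 3-subset of vertices to lie in the same number of blocks. -/
theorem stmt_12 {V : Type*} [Fintype V] [DecidableEq V]
    (n : ℕ) (hn : Fintype.card V = n) (hn4 : n % 4 = 3) (hn7 : 7 ≤ n)
    (r : V → V → Prop) [DecidableRel r]
    (hirr : ∀ x, ¬r x x)
    (htour : ∀ x y : V, x ≠ y → (r x y ↔ ¬r y x))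
    (hout : ∀ x, (Finset.univ.filter fun z => r x z).card = (n - 1) / 2)
    (hin : ∀ x, (Finset.univ.filter fun z => r z x).card = (n - 1) / 2)
    (hcoout : ∀ x y : V, x ≠ y →
      (Finset.univ.filter fun z => r x z ∧ r y z).card = (n - 3) / 4)
    (hcoin : ∀ x y : V, x ≠ y →
      (Finset.univ.filter fun z => r z x ∧ r z y).card = (n - 3) / 4) :
    ¬∃ lam : ℕ, ∀ x y z : V, x ≠ y → x ≠ z → y ≠ z →
      (Finset.univ.filter fun w => r w x ∧ r w y ∧ r w z).card +
      (Finset.univ.filter fun w => r x w ∧ r y w ∧ r z w).card = lam := by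
  rintro ⟨lam, hlam⟩
  set k := (n - 1) / 2 with hk
  set m := (n - 3) / 4 with hm
  have hVpos : 0 < Fintype.card V := by omega
  obtain ⟨x⟩ := Fintype.card_pos_iff.mp hVpos
  -- pick y with r x y
  have hy : (univ.filter fun w => r x w).Nonempty := by
    rw [← Finset.card_pos, hout x]; omega
  obtain ⟨y, hy⟩ := hy
  have hxy : r x y := (Finset.mem_filter.mp hy).2
  have hxyne : x ≠ y := fun h => hirr x (h ▸ hxy)
  -- pick z with r x z ∧ r y z : transitive triple
  have hz : (univ.filter fun w => r x w ∧ r y w).Nonempty := by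
    rw [← Finset.card_pos, hcoout x y hxyne]; omega
  obtain ⟨z, hz⟩ := hz
  obtain ⟨hxz, hyz⟩ := (Finset.mem_filter.mp hz).2
  have hxzne : x ≠ z := fun h => hirr x (h ▸ hxz)
  have hyzne : y ≠ z := fun h => hirr y (h ▸ hyz)
  have ht1 := tri_count_aux n k m hn r hirr htour hin (fun a b h => hcoin a b h)
    x y z hxy hyz
  rw [hlam x y z hxyne hxzne hyzne, if_pos hxz] at ht1
  -- pick z' with r y z' ∧ ¬ r x z' : cyclic triple x → y → z' → x
  have hsplit := Finset.card_filter_add_card_filter_not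
    (s := univ.filter fun w => r y w) (p := fun w => r x w)
  rw [Finset.filter_filter, Finset.filter_filter, hout y] at hsplit
  have hc1 : (univ.filter fun w => r y w ∧ r x w).card = m := by
    rw [← hcoout x y hxyne]
    congr 1
    ext w
    simp [and_comm]
  rw [hc1] at hsplit
  have hz' : (univ.filter fun w => r y w ∧ ¬ r x w).Nonempty := by
    rw [← Finset.card_pos]; omega
  obtain ⟨z', hz'⟩ := hz'
  obtain ⟨hyz', hnxz'⟩ := (Finset.mem_filter.mp hz').2
  have hyz'ne : y ≠ z' := fun h => hirr y (h ▸ hyz')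
  have hxz'ne : x ≠ z' := by
    rintro rfl
    exact (htour x y hxyne).mp hxy hyz'
  have hz'x : r z' x := by
    have := htour x z' hxz'ne; tauto
  have ht2 := tri_count_aux n k m hn r hirr htour hin (fun a b h => hcoin a b h)
    y z' x hyz' hz'x
  have hyxne : y ≠ x := Ne.symm hxyne
  have hz'xne : z' ≠ x := Ne.symm hxz'ne
  have hyx : ¬ r y x := (htour x y hxyne).mp hxy
  rw [hlam y z' x hyz'ne hyxne hz'xne, if_neg hyx] at ht2
  omega
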